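/- For any locally integrable f on the upper half-space R^{1+n}_+ and any x ∈ R^n, the Carleson functional satisfies Cf(x) ≲ M(Af)(x), where A is the area functional with aperture α, M is the Hardy–Littlewood maximal function, and the implicit constant depends only on n and α. -/

import Mathlib

open MeasureTheory Set ENNReal

noncomputable section

/-- The axis-parallel cube in `ℝⁿ` with lower corner `a` and side length `l`. -/
def cube {n : ℕ} (a : Fin n → ℝ) (l : ℝ) : Set (Fin n → ℝ) :=
  {x | ∀ i, a i ≤ x i ∧ x i < a i + l}

/-- The Carleson functional `Cf(x) = sup_{Q ∋ x} |Q|⁻¹ ∫∫_{(0,ℓ(Q))×Q} |f| dt dy`. -/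
def carlesonFn {n : ℕ} (f : ℝ × (Fin n → ℝ) → ℝ) (x : Fin n → ℝ) : ℝ≥0∞ :=
  ⨆ (a : Fin n → ℝ) (l : ℝ) (_ : 0 < l) (_ : x ∈ cube a l),
    (∫⁻ p in (Set.Ioo (0 : ℝ) l) ×ˢ cube a l, (‖f p‖₊ : ℝ≥0∞)) / volume (cube a l)

/-- The area functional `Af(x) = ∫∫_{|y−x|<αt} |f(t,y)| t^{−n} dt dy` with aperture `α`. -/
def areaFn {n : ℕ} (α : ℝ) (f : ℝ × (Fin n → ℝ) → ℝ) (x : Fin n → ℝ) : ℝ≥0∞ :=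
  ∫⁻ p in {p : ℝ × (Fin n → ℝ) | 0 < p.1 ∧ dist p.2 x < α * p.1},
    (‖f p‖₊ : ℝ≥0∞) * ENNReal.ofReal (p.1⁻¹ ^ n)

/-- The Hardy–Littlewood maximal function (over cubes) of an `ℝ≥0∞`-valued function. -/
def maxHL {n : ℕ} (F : (Fin n → ℝ) → ℝ≥0∞) (x : Fin n → ℝ) : ℝ≥0∞ :=
  ⨆ (a : Fin n → ℝ) (l : ℝ) (_ : 0 < l) (_ : x ∈ cube a l),
    (∫⁻ y in cube a l, F y) / volume (cube a l)

lemma cube_eq {n : ℕ} (a : Fin n → ℝ) (l : ℝ) :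
    cube a l = Set.pi univ fun i => Ico (a i) (a i + l) := by
  ext x; simp [cube, Set.mem_pi]

lemma measurableSet_cube {n : ℕ} (a : Fin n → ℝ) (l : ℝ) : MeasurableSet (cube a l) := by
  rw [cube_eq]; exact MeasurableSet.univ_pi fun i => measurableSet_Ico

lemma volume_cube {n : ℕ} (a : Fin n → ℝ) (l : ℝ) :
    volume (cube a l) = ENNReal.ofReal l ^ n := by
  rw [cube_eq, volume_pi_pi]
  simp [Real.volume_Ico]

lemma volume_ball_pi {n : ℕ} (y : Fin n → ℝ) {r : ℝ} (hr : 0 < r) :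
    volume (Metric.ball y r) = ENNReal.ofReal (2 * r) ^ n := by
  rw [ball_pi y hr, volume_pi_pi]
  simp [Real.volume_ball]

lemma ball_subset_cube {n : ℕ} {a : Fin n → ℝ} {l α t : ℝ} (hα : 0 < α) (ht : 0 < t)
    (htl : t < l) {y : Fin n → ℝ} (hy : y ∈ cube a l) :
    Metric.ball y (α * t) ⊆ cube (fun i => a i - α * l) ((1 + 2 * α) * l) := by
  intro z hz i
  have h1 : dist (z i) (y i) < α * l := by
    calc dist (z i) (y i) ≤ dist z y := dist_le_pi_dist z y i
    _ < α * t := hz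
    _ ≤ α * l := by nlinarith
  rw [Real.dist_eq, abs_lt] at h1
  have h2 := hy i
  constructor <;> dsimp only <;> nlinarith [h1.1, h1.2, h2.1, h2.2]

lemma cube_subset_cube {n : ℕ} {a : Fin n → ℝ} {l α : ℝ} (hα : 0 < α) (hl : 0 < l) :
    cube a l ⊆ cube (fun i => a i - α * l) ((1 + 2 * α) * l) := by
  intro y hy i
  have h := hy i
  constructor <;> dsimp only <;> nlinarith [h.1, h.2]

lemma key_ineq {n : ℕ} {α : ℝ} (hα : 0 < α) (f : ℝ × (Fin n → ℝ) → ℝ) (hf : Measurable f)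
    (a : Fin n → ℝ) {l : ℝ} (hl : 0 < l) :
    ENNReal.ofReal ((2 * α) ^ n) *
      ∫⁻ p in (Set.Ioo (0 : ℝ) l) ×ˢ cube a l, (‖f p‖₊ : ℝ≥0∞) ≤
    ∫⁻ z in cube (fun i => a i - α * l) ((1 + 2 * α) * l), areaFn α f z := by
  set Q' := cube (fun i => a i - α * l) ((1 + 2 * α) * l) with hQ'
  set g : ℝ × (Fin n → ℝ) → ℝ≥0∞ :=
    fun p => (‖f p‖₊ : ℝ≥0∞) * ENNReal.ofReal (p.1⁻¹ ^ n) with hg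
  have hgm : Measurable g :=
    (hf.nnnorm.coe_nnreal_ennreal).mul
      (ENNReal.measurable_ofReal.comp ((measurable_fst.inv).pow_const n))
  set T : Set ((Fin n → ℝ) × (ℝ × (Fin n → ℝ))) :=
    {q | 0 < q.2.1 ∧ dist q.2.2 q.1 < α * q.2.1} with hT
  have hTm : MeasurableSet T := by
    apply MeasurableSet.inter
    · exact measurableSet_lt measurable_const measurable_snd.fst
    · exact measurableSet_lt (continuous_snd.snd.dist continuous_fst).measurable
        (measurable_snd.fst.const_mul α)
  -- the set of z seen from p
  set s : ℝ × (Fin n → ℝ) → Set (Fin n → ℝ) :=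
    fun p => {z | 0 < p.1 ∧ dist p.2 z < α * p.1} with hs
  have hsball : ∀ p : ℝ × (Fin n → ℝ), 0 < p.1 → s p = Metric.ball p.2 (α * p.1) := by
    intro p hp
    ext z
    simp [hs, hp, Metric.mem_ball, dist_comm]
  have hsm : ∀ p, MeasurableSet (s p) := by
    intro p
    by_cases hp : 0 < p.1
    · rw [hsball p hp]; exact measurableSet_ball
    · have : s p = ∅ := by ext z; simp [hs, hp]
      rw [this]; exact MeasurableSet.empty
  have step1 : ∀ z : Fin n → ℝ,
      areaFn α f z = ∫⁻ p : ℝ × (Fin n → ℝ), T.indicator (fun q => g q.2) (z, p) := by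
    intro z
    have hSz : MeasurableSet {p : ℝ × (Fin n → ℝ) | 0 < p.1 ∧ dist p.2 z < α * p.1} := by
      apply MeasurableSet.inter
      · exact measurableSet_lt measurable_const measurable_fst
      · exact measurableSet_lt (continuous_snd.dist continuous_const).measurable
          (measurable_fst.const_mul α)
    rw [areaFn, ← lintegral_indicator hSz]
    congr 1
  have swap :
      ∫⁻ z in Q', ∫⁻ p : ℝ × (Fin n → ℝ), T.indicator (fun q => g q.2) (z, p) =
      ∫⁻ p : ℝ × (Fin n → ℝ), ∫⁻ z in Q', T.indicator (fun q => g q.2) (z, p) := by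
    apply lintegral_lintegral_swap
    exact ((hgm.comp measurable_snd).indicator hTm).aemeasurable
  have inner : ∀ p : ℝ × (Fin n → ℝ),
      ∫⁻ z in Q', T.indicator (fun q => g q.2) (z, p) = g p * volume (s p ∩ Q') := by
    intro p
    have heq : (fun z => T.indicator (fun q => g q.2) (z, p)) =
        (s p).indicator (fun _ => g p) := by
      funext z
      simp only [Set.indicator_apply]
      rfl
    rw [heq, lintegral_indicator (hsm p), setLIntegral_const,
      Measure.restrict_apply (hsm p)]
  calc ENNReal.ofReal ((2 * α) ^ n) *
        ∫⁻ p in (Set.Ioo (0 : ℝ) l) ×ˢ cube a l, (‖f p‖₊ : ℝ≥0∞)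
      = ∫⁻ p in (Set.Ioo (0 : ℝ) l) ×ˢ cube a l,
          ENNReal.ofReal ((2 * α) ^ n) * (‖f p‖₊ : ℝ≥0∞) := by
        rw [lintegral_const_mul _ hf.nnnorm.coe_nnreal_ennreal]
    _ = ∫⁻ p in (Set.Ioo (0 : ℝ) l) ×ˢ cube a l, g p * volume (s p ∩ Q') := by
        apply setLIntegral_congr_fun (measurableSet_Ioo.prod (measurableSet_cube a l))
        intro p hp
        dsimp only
        obtain ⟨hp1, hp2⟩ := hp
        have hp0 : 0 < p.1 := hp1.1
        have hsub : s p ∩ Q' = Metric.ball p.2 (α * p.1) := by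
          rw [hsball p hp0]
          exact inter_eq_left.mpr (ball_subset_cube hα hp0 hp1.2 hp2)
        rw [hsub, volume_ball_pi _ (by positivity)]
        rw [hg]
        have harith : ENNReal.ofReal (p.1⁻¹ ^ n) * ENNReal.ofReal (2 * (α * p.1)) ^ n
            = ENNReal.ofReal ((2 * α) ^ n) := by
          rw [← ENNReal.ofReal_pow (by positivity), ← ENNReal.ofReal_mul (by positivity)]
          congr 1
          rw [← mul_pow]
          congr 1
          field_simp
        rw [mul_assoc, harith, mul_comm]
    _ ≤ ∫⁻ p : ℝ × (Fin n → ℝ), g p * volume (s p ∩ Q') :=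
        setLIntegral_le_lintegral _ _
    _ = ∫⁻ p : ℝ × (Fin n → ℝ), ∫⁻ z in Q', T.indicator (fun q => g q.2) (z, p) := by
        simp_rw [inner]
    _ = ∫⁻ z in Q', ∫⁻ p : ℝ × (Fin n → ℝ), T.indicator (fun q => g q.2) (z, p) :=
        swap.symm
    _ = ∫⁻ z in Q', areaFn α f z := by simp_rw [← step1]

/-- `Cf(x) ≲ M(Af)(x)` pointwise, with constant depending only on `n` and `α`. -/
theorem stmt1 (n : ℕ) (α : ℝ) (hα : 0 < α) :
    ∃ C : ℝ≥0∞, C ≠ ⊤ ∧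
      ∀ (f : ℝ × (Fin n → ℝ) → ℝ), Measurable f →
        ∀ x : Fin n → ℝ, carlesonFn f x ≤ C * maxHL (areaFn α f) x := by
  set c : ℝ≥0∞ := ENNReal.ofReal ((2 * α) ^ n) with hc
  set K : ℝ≥0∞ := ENNReal.ofReal ((1 + 2 * α) ^ n) with hK
  have hc0 : c ≠ 0 := by
    simp only [hc, ne_eq, ENNReal.ofReal_eq_zero, not_le]
    positivity
  have hcT : c ≠ ⊤ := ENNReal.ofReal_ne_top
  have hK0 : K ≠ 0 := by
    simp only [hK, ne_eq, ENNReal.ofReal_eq_zero, not_le]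
    positivity
  have hKT : K ≠ ⊤ := ENNReal.ofReal_ne_top
  refine ⟨c⁻¹ * K, ENNReal.mul_ne_top (ENNReal.inv_ne_top.mpr hc0) hKT, ?_⟩
  intro f hf x
  rw [carlesonFn]
  refine iSup_le fun a => iSup_le fun l => iSup_le fun hl => iSup_le fun hx => ?_
  set a' : Fin n → ℝ := fun i => a i - α * l with ha'
  set l' : ℝ := (1 + 2 * α) * l with hl'
  have hl'pos : 0 < l' := by positivity
  have hx' : x ∈ cube a' l' := cube_subset_cube hα hl hx
  set I : ℝ≥0∞ := ∫⁻ z in cube a' l', areaFn α f z with hI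
  set J : ℝ≥0∞ := ∫⁻ p in (Set.Ioo (0 : ℝ) l) ×ˢ cube a l, (‖f p‖₊ : ℝ≥0∞) with hJ
  have hkey : c * J ≤ I := key_ineq hα f hf a hl
  have hJle : J ≤ c⁻¹ * I := by
    calc J = c⁻¹ * (c * J) := by
          rw [← mul_assoc, ENNReal.inv_mul_cancel hc0 hcT, one_mul]
      _ ≤ c⁻¹ * I := mul_le_mul_right hkey _
  have hvol : volume (cube a' l') = K * volume (cube a l) := by
    rw [volume_cube, volume_cube, hl', ENNReal.ofReal_mul (by positivity), mul_pow, hK,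
      ENNReal.ofReal_pow (by positivity)]
  have hmax : I / volume (cube a' l') ≤ maxHL (areaFn α f) x := by
    refine le_iSup_of_le a' (le_iSup_of_le l' (le_iSup_of_le hl'pos (le_iSup_of_le hx' le_rfl)))
  calc J / volume (cube a l)
      ≤ (c⁻¹ * I) / volume (cube a l) :=
        ENNReal.div_le_div_right hJle _
    _ = c⁻¹ * (I / volume (cube a l)) := by
        rw [div_eq_mul_inv, div_eq_mul_inv, mul_assoc]
    _ = c⁻¹ * (K * (I / (K * volume (cube a l)))) := by
        have h : K * (I / (K * volume (cube a l))) = I / volume (cube a l) := by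
          rw [← mul_div_assoc, ENNReal.mul_div_mul_left _ _ hK0 hKT]
        rw [h]
    _ = (c⁻¹ * K) * (I / volume (cube a' l')) := by
        rw [hvol, mul_assoc]
    _ ≤ (c⁻¹ * K) * maxHL (areaFn α f) x := mul_le_mul_right hmax _
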